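/- arXiv:1604.04342 — 3 statements merged into one kernel-verified Lean document; each statement's English description precedes it below -/
import Mathlib

section
/- Let F, μ ≥ 0 be measurable functions (pointwise values F, μ > 0) and 0 < δ̄ ≤ 1 be a constant. At any point where |F − μ| ≥ δ̄·μ, one has |F − μ| ≤ (4/δ̄)·( F ln F − μ ln μ − (1 + ln μ)(F − μ) ). -/
lemma aux_log_ge (x : ℝ) (hx : 1 ≤ x) : 2*(x-1)/(x+1) ≤ Real.log x := by
  have key : MonotoneOn (fun y : ℝ => Real.log y - 2*(y-1)/(y+1)) (Set.Ici 1) := by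
    apply monotoneOn_of_deriv_nonneg (convex_Ici 1)
    · apply ContinuousOn.sub
      · exact Real.continuousOn_log.mono (fun y hy => by simp at hy ⊢; linarith)
      · apply ContinuousOn.div (by fun_prop) (by fun_prop)
        intro y hy; simp at hy; positivity
    · intro y hy
      rw [interior_Ici] at hy
      have hy1 : (1:ℝ) < y := hy
      have hylog : HasDerivAt Real.log (1/y) y := by
        simpa [one_div] using Real.hasDerivAt_log (by linarith)
      have hrat : HasDerivAt (fun y : ℝ => 2*(y-1)/(y+1)) (4/(y+1)^2) y := by
        have hd := (((hasDerivAt_id y).sub_const 1).const_mul 2).div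
          ((hasDerivAt_id y).add_const 1) (by simp only [id_eq]; linarith)
        exact hd.congr_deriv (by simp only [id_eq]; congr 1; ring)
      have := (hylog.sub hrat).differentiableAt
      exact this.differentiableWithinAt
    · intro y hy
      rw [interior_Ici] at hy
      have hy1 : (1:ℝ) < y := hy
      have hylog : HasDerivAt Real.log (1/y) y := by
        simpa [one_div] using Real.hasDerivAt_log (by linarith)
      have hrat : HasDerivAt (fun y : ℝ => 2*(y-1)/(y+1)) (4/(y+1)^2) y := by
        have hd := (((hasDerivAt_id y).sub_const 1).const_mul 2).div
          ((hasDerivAt_id y).add_const 1) (by simp only [id_eq]; linarith)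
        exact hd.congr_deriv (by simp only [id_eq]; congr 1; ring)
      rw [HasDerivAt.deriv (f := fun y => Real.log y - 2*(y-1)/(y+1)) (hylog.sub hrat)]
      have h1 : 1/y - 4/(y+1)^2 = (y-1)^2/(y*(y+1)^2) := by field_simp; ring
      rw [h1]; positivity
  have := key (Set.self_mem_Ici) (Set.mem_Ici.mpr hx) hx
  simp only [Real.log_one] at this
  linarith

lemma aux_log_le (x : ℝ) (hx : 1 ≤ x) : Real.log x ≤ (x^2-1)/(2*x) := by
  have key : MonotoneOn (fun y : ℝ => (y^2-1)/(2*y) - Real.log y) (Set.Ici 1) := by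
    apply monotoneOn_of_deriv_nonneg (convex_Ici 1)
    · apply ContinuousOn.sub
      · apply ContinuousOn.div (by fun_prop) (by fun_prop)
        intro y hy; simp at hy; positivity
      · exact Real.continuousOn_log.mono (fun y hy => by simp at hy ⊢; linarith)
    · intro y hy
      rw [interior_Ici] at hy
      have hy1 : (1:ℝ) < y := hy
      have hylog : HasDerivAt Real.log (1/y) y := by
        simpa [one_div] using Real.hasDerivAt_log (by linarith)
      have hrat : HasDerivAt (fun y : ℝ => (y^2-1)/(2*y)) ((y^2+1)/(2*y^2)) y := by
        have hd := (((hasDerivAt_pow 2 y)).sub_const 1).div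
          ((hasDerivAt_id y).const_mul 2) (by simp only [id_eq]; positivity)
        exact hd.congr_deriv (by have hy0 : y ≠ 0 := ne_of_gt (by linarith); simp only [id_eq]; field_simp; ring)
      exact ((hrat.sub hylog).differentiableAt).differentiableWithinAt
    · intro y hy
      rw [interior_Ici] at hy
      have hy1 : (1:ℝ) < y := hy
      have hylog : HasDerivAt Real.log (1/y) y := by
        simpa [one_div] using Real.hasDerivAt_log (by linarith)
      have hrat : HasDerivAt (fun y : ℝ => (y^2-1)/(2*y)) ((y^2+1)/(2*y^2)) y := by
        have hd := (((hasDerivAt_pow 2 y)).sub_const 1).div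
          ((hasDerivAt_id y).const_mul 2) (by simp only [id_eq]; positivity)
        exact hd.congr_deriv (by have hy0 : y ≠ 0 := ne_of_gt (by linarith); simp only [id_eq]; field_simp; ring)
      rw [HasDerivAt.deriv (f := fun y => (y^2-1)/(2*y) - Real.log y) (hrat.sub hylog)]
      have h1 : (y^2+1)/(2*y^2) - 1/y = (y-1)^2/(2*y^2) := by field_simp; ring
      rw [h1]; positivity
  have := key (Set.self_mem_Ici) (Set.mem_Ici.mpr hx) hx
  simp only [Real.log_one] at this
  linarith

theorem entropy_pointwise_bound (F μ δ : ℝ) (hF : 0 < F) (hμ : 0 < μ)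
    (hδ0 : 0 < δ) (hδ1 : δ ≤ 1) (h : δ * μ ≤ |F - μ|) :
    |F - μ| ≤ (4 / δ) *
      (F * Real.log F - μ * Real.log μ - (1 + Real.log μ) * (F - μ)) := by
  set L : ℝ := Real.log F - Real.log μ with hL
  have hEeq : F * Real.log F - μ * Real.log μ - (1 + Real.log μ) * (F - μ)
      = F * L - (F - μ) := by rw [hL]; ring
  rw [hEeq]
  rcases le_or_gt μ F with hFμ | hFμ
  · -- case μ ≤ F
    rw [abs_of_nonneg (by linarith)] at h ⊢
    have hx : 1 ≤ F / μ := (le_div_iff₀ hμ).mpr (by linarith)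
    have h1 := aux_log_ge (F/μ) hx
    rw [Real.log_div hF.ne' hμ.ne'] at h1
    have heq : 2*(F/μ - 1)/(F/μ + 1) = 2*(F-μ)/(F+μ) := by
      field_simp
    rw [heq] at h1
    have k2 : 2*(F-μ) ≤ L * (F+μ) := by
      rw [div_le_iff₀ (by positivity)] at h1; rw [hL]; linarith
    have hE2 : (F-μ)^2/(F+μ) ≤ F * L - (F - μ) := by
      rw [div_le_iff₀ (by positivity)]
      nlinarith [mul_le_mul_of_nonneg_left k2 hF.le]
    have h3 : (F-μ)*δ ≤ 4*((F-μ)^2/(F+μ)) := by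
      rw [mul_div_assoc', le_div_iff₀ (by positivity)]
      nlinarith [mul_le_mul_of_nonneg_left h (show (0:ℝ) ≤ 4-δ by linarith),
        mul_le_mul_of_nonneg_left h hδ0.le, mul_pos hδ0 hμ]
    rw [div_mul_eq_mul_div, le_div_iff₀ hδ0, mul_comm]
    linarith
  · -- case F < μ
    rw [abs_of_nonpos (by linarith)] at h ⊢
    have hx : 1 ≤ μ / F := (le_div_iff₀ hF).mpr (by linarith)
    have h1 := aux_log_le (μ/F) hx
    rw [Real.log_div hμ.ne' hF.ne'] at h1
    have heq : ((μ/F)^2 - 1)/(2*(μ/F)) = (μ^2-F^2)/(2*F*μ) := by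
      field_simp
    rw [heq] at h1
    have k2 : (Real.log μ - Real.log F) * (2*F*μ) ≤ μ^2 - F^2 := by
      rw [le_div_iff₀ (by positivity)] at h1; linarith
    have hLmk : Real.log μ - Real.log F = -L := by rw [hL]; ring
    rw [hLmk] at k2
    have hE2 : (μ-F)^2/(2*μ) ≤ F * L - (F - μ) := by
      rw [div_le_iff₀ (by positivity)]
      nlinarith [k2]
    have h3 : (μ-F)*δ ≤ 4*((μ-F)^2/(2*μ)) := by
      rw [mul_div_assoc', le_div_iff₀ (by positivity)]
      nlinarith [mul_le_mul_of_nonneg_left h (show (0:ℝ) ≤ 4-δ by linarith),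
        mul_le_mul_of_nonneg_left h hδ0.le, mul_pos hδ0 hμ]
    rw [div_mul_eq_mul_div, le_div_iff₀ hδ0, mul_comm]
    linarith
end

section
/- Let Ω ⊂ ℝ³ be a bounded open set, and consider the trajectory X(s) = x + v(s − t) + ∫ₜ^s ∫ₜ^τ (−∇Φ)(σ, X(σ)) dσ dτ of a particle with position x ∈ closure(Ω) at time t, velocity v with |v| ≥ 1/N, and force field −∇Φ satisfying ‖∇Φ‖_∞ < δ/(3·diam(Ω)·N²) with N ≫ 1, 0 < δ ≪ 1. Then the backward exit time t_b(t,x,v) := sup{ s ≥ 0 : X(τ;t,x,v) ∈ Ω for all τ ∈ (t−s, t) } satisfies t_b(t,x,v) ≤ 3N·diam(Ω). -/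
theorem backward_exit_time_bound
    (Ω : Set (EuclideanSpace ℝ (Fin 3))) (hΩo : IsOpen Ω)
    (hΩb : Bornology.IsBounded Ω)
    (N δ M : ℝ) (hN : 1 ≤ N) (hδ0 : 0 < δ) (hδ1 : δ ≤ 1)
    (hM0 : 0 ≤ M) (hM : M < δ / (3 * Metric.diam Ω * N ^ 2))
    (t : ℝ) (x v : EuclideanSpace ℝ (Fin 3))
    (hx : x ∈ closure Ω) (hv : 1 / N ≤ ‖v‖)
    (X V A : ℝ → EuclideanSpace ℝ (Fin 3))
    (hX : ∀ s, HasDerivAt X (V s) s) (hV : ∀ s, HasDerivAt V (A s) s)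
    (hA : ∀ s, ‖A s‖ ≤ M) (hXt : X t = x) (hVt : V t = v)
    (s : ℝ) (hs0 : 0 ≤ s) (hsΩ : ∀ τ ∈ Set.Ioo (t - s) t, X τ ∈ Ω) :
    s ≤ 3 * N * Metric.diam Ω := by
  set D := Metric.diam Ω with hD
  have hN0 : (0 : ℝ) < N := lt_of_lt_of_le one_pos hN
  have hD0 : 0 < D := by
    rcases lt_or_eq_of_le (Metric.diam_nonneg (s := Ω)) with h | h
    · exact h
    · exfalso
      rw [hD, ← h] at hM
      simp at hM
      linarith
  by_contra hcon
  push_neg at hcon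
  set c := 3 * N * D with hc
  have hc0 : 0 < c := by positivity
  have hτ : t - c ∈ Set.Ioo (t - s) t := ⟨by linarith, by linarith⟩
  have hXτ : X (t - c) ∈ Ω := hsΩ _ hτ
  -- Step 1: ‖V (t - u) - v‖ ≤ M * u on [0, c]
  have stepV : ∀ u ∈ Set.Icc (0 : ℝ) c, ‖V (t - u) - v‖ ≤ M * u := by
    have hf' : ∀ u : ℝ, HasDerivAt (fun u => V (t - u) - v) (-A (t - u)) u := by
      intro u
      have h1 : HasDerivAt (fun u : ℝ => t - u) (-1) u := by
        simpa using (hasDerivAt_id u).const_sub t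
      have := (hV (t - u)).scomp u h1
      simpa using this.sub_const v
    refine image_norm_le_of_norm_deriv_right_le_deriv_boundary
      (f := fun u => V (t - u) - v) (f' := fun u => -A (t - u))
      (B := fun u => M * u) (B' := fun _ => M)
      (fun u _ => (hf' u).continuousAt.continuousWithinAt)
      (fun u _ => (hf' u).hasDerivWithinAt) (by simp [hVt])
      (fun u => by simpa using (hasDerivAt_id u).const_mul M)
      (fun u _ => by simpa using hA (t - u))
  -- Step 2: ‖X (t - u) - x + u • v‖ ≤ M * u ^ 2 / 2 on [0, c]
  have stepX : ∀ u ∈ Set.Icc (0 : ℝ) c, ‖X (t - u) - x + u • v‖ ≤ M * u ^ 2 / 2 := by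
    have hf' : ∀ u : ℝ, HasDerivAt (fun u => X (t - u) - x + u • v) (v - V (t - u)) u := by
      intro u
      have h1 : HasDerivAt (fun u : ℝ => t - u) (-1) u := by
        simpa using (hasDerivAt_id u).const_sub t
      have h2 := ((hX (t - u)).scomp u h1).sub_const x
      have h3 : HasDerivAt (fun u : ℝ => u • v) v u := by
        simpa using (hasDerivAt_id u).smul_const v
      have := h2.add h3
      have h4 : HasDerivAt (fun u => X (t - u) - x + u • v) ((-1 : ℝ) • V (t - u) + v) u := this
      exact h4.congr_deriv (by rw [neg_one_smul]; abel)
    refine image_norm_le_of_norm_deriv_right_le_deriv_boundary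
      (f := fun u => X (t - u) - x + u • v) (f' := fun u => v - V (t - u))
      (B := fun u => M * u ^ 2 / 2) (B' := fun u => M * u)
      (fun u _ => (hf' u).continuousAt.continuousWithinAt)
      (fun u _ => (hf' u).hasDerivWithinAt) (by simp [hXt])
      (fun u => by
        have h := ((hasDerivAt_pow 2 u).const_mul M).div_const 2
        norm_num at h
        exact h.congr_deriv (by ring))
      (fun u hu => by
        have := stepV u ⟨hu.1, le_of_lt hu.2⟩
        simpa [norm_sub_rev] using this)
  have key := stepX c ⟨le_of_lt hc0, le_refl c⟩
  -- distance bound from Ω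
  have hdist : dist (X (t - c)) x ≤ D := by
    have h1 : X (t - c) ∈ closure Ω := subset_closure hXτ
    have := Metric.dist_le_diam_of_mem hΩb.closure h1 hx
    rwa [Metric.diam_closure] at this
  have hdist' : ‖X (t - c) - x‖ ≤ D := by rwa [dist_eq_norm] at hdist
  -- lower bound on ‖X (t-c) - x‖
  have hcv : ‖c • v‖ ≥ 3 * D := by
    rw [norm_smul, Real.norm_eq_abs, abs_of_pos hc0]
    calc (3 : ℝ) * D = (3 * N * D) * (1 / N) := by field_simp
      _ ≤ c * ‖v‖ := by
          apply mul_le_mul_of_nonneg_left hv (le_of_lt hc0)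
  have hMc : M * c ^ 2 / 2 < 3 * D / 2 := by
    have h1 : M * c ^ 2 < δ / (3 * D * N ^ 2) * c ^ 2 := by
      apply mul_lt_mul_of_pos_right hM (by positivity)
    have h2 : δ / (3 * D * N ^ 2) * c ^ 2 = 3 * δ * D := by
      field_simp [hc]; ring
    nlinarith
  have hlow : 3 * D - M * c ^ 2 / 2 ≤ ‖X (t - c) - x‖ := by
    have h1 : ‖c • v‖ ≤ ‖X (t - c) - x + c • v‖ + ‖X (t - c) - x‖ := by
      have := norm_sub_le (X (t - c) - x + c • v) (X (t - c) - x)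
      simpa using this
    linarith [key, hcv]
  linarith
end

section
/- Let R be a 4×4 real matrix partitioned into 2×2 blocks, and suppose |det R| ≥ ρ > 0 while every entry of R is bounded in absolute value by C. Then there exist indices i, j ∈ {1,2,3,4} with i < j such that the 2×2 minor formed from rows 3,4 and columns i,j of R satisfies |det [[R_{3,i}, R_{3,j}],[R_{4,i}, R_{4,j}]]| ≥ ρ/(12 C²). -/
private lemma det4_laplace (R : Matrix (Fin 4) (Fin 4) ℝ) :
    R.det =
      (R 0 0 * R 1 1 - R 0 1 * R 1 0) * (R 2 2 * R 3 3 - R 2 3 * R 3 2)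
    - (R 0 0 * R 1 2 - R 0 2 * R 1 0) * (R 2 1 * R 3 3 - R 2 3 * R 3 1)
    + (R 0 0 * R 1 3 - R 0 3 * R 1 0) * (R 2 1 * R 3 2 - R 2 2 * R 3 1)
    + (R 0 1 * R 1 2 - R 0 2 * R 1 1) * (R 2 0 * R 3 3 - R 2 3 * R 3 0)
    - (R 0 1 * R 1 3 - R 0 3 * R 1 1) * (R 2 0 * R 3 2 - R 2 2 * R 3 0)
    + (R 0 2 * R 1 3 - R 0 3 * R 1 2) * (R 2 0 * R 3 1 - R 2 1 * R 3 0) := by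
  have e1 : (Fin.succ 2 : Fin 4) = 3 := rfl
  have e2 : Fin.succAbove (2 : Fin 4) 2 = 3 := rfl
  have e3 : Fin.succAbove (1 : Fin 4) 2 = 3 := rfl
  have e4 : Fin.castSucc (2 : Fin 3) = (2 : Fin 4) := rfl
  have e5 : Fin.succAbove (3 : Fin 4) 2 = 2 := rfl
  simp [Matrix.det_succ_row_zero, Fin.sum_univ_succ, e1, e2, e3, e4, e5]
  ring

private lemma top_minor_bound {a b c d C : ℝ} (ha : |a| ≤ C) (hb : |b| ≤ C)
    (hc : |c| ≤ C) (hd : |d| ≤ C) : |a * b - c * d| ≤ 2 * C ^ 2 := by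
  have h1 : |a * b| ≤ C ^ 2 := by
    rw [abs_mul]
    calc |a| * |b| ≤ C * C := mul_le_mul ha hb (abs_nonneg _) ((abs_nonneg a).trans ha)
    _ = C ^ 2 := (sq C).symm
  have h2 : |c * d| ≤ C ^ 2 := by
    rw [abs_mul]
    calc |c| * |d| ≤ C * C := mul_le_mul hc hd (abs_nonneg _) ((abs_nonneg c).trans hc)
    _ = C ^ 2 := (sq C).symm
  calc |a * b - c * d| ≤ |a * b| + |c * d| := abs_sub _ _
  _ ≤ 2 * C ^ 2 := by linarith

private lemma term_bound {A m ε C : ℝ} (hA : |A| ≤ 2 * C ^ 2) (hm : |m| < ε)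
    (hC2 : 0 < 2 * C ^ 2) : |A * m| < 2 * C ^ 2 * ε := by
  rw [abs_mul]
  calc |A| * |m| ≤ 2 * C ^ 2 * |m| := mul_le_mul_of_nonneg_right hA (abs_nonneg _)
  _ < 2 * C ^ 2 * ε := by exact mul_lt_mul_of_pos_left hm hC2

theorem bottom_rows_minor_lower_bound (R : Matrix (Fin 4) (Fin 4) ℝ)
    (ρ C : ℝ) (hρ : 0 < ρ) (hC : 0 < C)
    (hdet : ρ ≤ |R.det|) (hent : ∀ i j, |R i j| ≤ C) :
    ∃ i j : Fin 4, i < j ∧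
      ρ / (12 * C ^ 2) ≤ |Matrix.det !![R 2 i, R 2 j; R 3 i, R 3 j]| := by
  by_contra hcon
  push_neg at hcon
  set ε := ρ / (12 * C ^ 2) with hε
  have hC2 : 0 < 2 * C ^ 2 := by positivity
  have hεpos : 0 < ε := by positivity
  -- minor bounds
  have hm : ∀ i j : Fin 4, i < j → |R 2 i * R 3 j - R 2 j * R 3 i| < ε := by
    intro i j hij
    have := hcon i j hij
    rwa [Matrix.det_fin_two_of] at this
  have m01 := hm 0 1 (by decide)
  have m02 := hm 0 2 (by decide)
  have m03 := hm 0 3 (by decide)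
  have m12 := hm 1 2 (by decide)
  have m13 := hm 1 3 (by decide)
  have m23 := hm 2 3 (by decide)
  -- top minor bounds
  have A01 := top_minor_bound (hent 0 0) (hent 1 1) (hent 0 1) (hent 1 0)
  have A02 := top_minor_bound (hent 0 0) (hent 1 2) (hent 0 2) (hent 1 0)
  have A03 := top_minor_bound (hent 0 0) (hent 1 3) (hent 0 3) (hent 1 0)
  have A12 := top_minor_bound (hent 0 1) (hent 1 2) (hent 0 2) (hent 1 1)
  have A13 := top_minor_bound (hent 0 1) (hent 1 3) (hent 0 3) (hent 1 1)
  have A23 := top_minor_bound (hent 0 2) (hent 1 3) (hent 0 3) (hent 1 2)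
  have t1 := term_bound A01 m23 hC2
  have t2 := term_bound A02 m13 hC2
  have t3 := term_bound A03 m12 hC2
  have t4 := term_bound A12 m03 hC2
  have t5 := term_bound A13 m02 hC2
  have t6 := term_bound A23 m01 hC2
  have hid := det4_laplace R
  set T1 := (R 0 0 * R 1 1 - R 0 1 * R 1 0) * (R 2 2 * R 3 3 - R 2 3 * R 3 2)
  set T2 := (R 0 0 * R 1 2 - R 0 2 * R 1 0) * (R 2 1 * R 3 3 - R 2 3 * R 3 1)
  set T3 := (R 0 0 * R 1 3 - R 0 3 * R 1 0) * (R 2 1 * R 3 2 - R 2 2 * R 3 1)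
  set T4 := (R 0 1 * R 1 2 - R 0 2 * R 1 1) * (R 2 0 * R 3 3 - R 2 3 * R 3 0)
  set T5 := (R 0 1 * R 1 3 - R 0 3 * R 1 1) * (R 2 0 * R 3 2 - R 2 2 * R 3 0)
  set T6 := (R 0 2 * R 1 3 - R 0 3 * R 1 2) * (R 2 0 * R 3 1 - R 2 1 * R 3 0)
  have habs : |R.det| ≤ |T1| + |T2| + |T3| + |T4| + |T5| + |T6| := by
    rw [hid]
    calc |T1 - T2 + T3 + T4 - T5 + T6|
        ≤ |T1 - T2 + T3 + T4 - T5| + |T6| := abs_add_le _ _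
      _ ≤ |T1 - T2 + T3 + T4| + |T5| + |T6| := by
          have := abs_sub (T1 - T2 + T3 + T4) T5; linarith
      _ ≤ |T1 - T2 + T3| + |T4| + |T5| + |T6| := by
          have := abs_add_le (T1 - T2 + T3) T4; linarith
      _ ≤ |T1 - T2| + |T3| + |T4| + |T5| + |T6| := by
          have := abs_add_le (T1 - T2) T3; linarith
      _ ≤ |T1| + |T2| + |T3| + |T4| + |T5| + |T6| := by
          have := abs_sub T1 T2; linarith
  have hfin : |R.det| < 12 * C ^ 2 * ε := by
    have : |T1| + |T2| + |T3| + |T4| + |T5| + |T6| < 6 * (2 * C ^ 2 * ε) := by linarith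
    linarith
  rw [hε] at hfin
  have : 12 * C ^ 2 * (ρ / (12 * C ^ 2)) = ρ := by field_simp
  linarith
end
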